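/- (Lemma 1, part A.) Let S(t) = ∑_{j=1}^k a_j e^{2πi ω_j t} with distinct integer frequencies ω_j and nonzero complex coefficients a_j, let p > 1 be an integer and h ∈ {0,…,p−1}, and suppose q := |I(S,h;p)| > 1 (i.e., more than one frequency is congruent to h modulo p). Let ε > 0 and let E = {ω_j − ω_l : j, l ∈ I(S,h;p)} be the set of pairwise differences of the aliased frequencies. If all the numbers εα for α ∈ E are pairwise distinct modulo 1 (i.e., for α ≠ β in E, ε(α − β) is not an integer), then there exists an integer m with 1 ≤ m ≤ q² − q such that |Ŝ_{p,mε}[h]| ≠ |Ŝ_p[h]|. -/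

import Mathlib

/-- The index set `I(S,h;p)` of frequencies congruent to `h` modulo `p`. -/
def aliasIdx {k : ℕ} (ω : Fin k → ℤ) (p h : ℕ) : Finset (Fin k) :=
  Finset.univ.filter (fun j => ω j ≡ (h : ℤ) [ZMOD (p : ℤ)])

/-- The signal `S(t) = ∑ j, a j * exp(2πi ω_j t)`. -/
noncomputable def signal {k : ℕ} (a : Fin k → ℂ) (ω : Fin k → ℤ) (t : ℝ) : ℂ :=
  ∑ j, a j * Complex.exp (2 * (Real.pi : ℂ) * Complex.I * (ω j : ℂ) * (t : ℂ))

/-- The shifted sub-sampled DFT `Ŝ_{p,ε}[h]`. -/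
noncomputable def sdft {k : ℕ} (a : Fin k → ℂ) (ω : Fin k → ℤ) (p : ℕ) (ε : ℝ) (h : ℕ) : ℂ :=
  ∑ n ∈ Finset.range p,
    signal a ω ((n : ℝ) / (p : ℝ) + ε) *
      Complex.exp (-(2 * (Real.pi : ℂ) * Complex.I) * (n : ℂ) * (h : ℂ) / (p : ℂ))

open Finset Complex

lemma vanish_of_sum_pow (s : Finset ℤ) (w : ℤ → ℂ) (hinj : Set.InjOn w s)
    (c : ℤ → ℂ) (N : ℕ) (hcard : s.card ≤ N + 1)
    (hz : ∀ m ∈ Finset.range (N+1), ∑ α ∈ s, c α * w α ^ m = 0) :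
    ∀ α ∈ s, c α = 0 := by
  intro α₀ hα₀
  set P := Lagrange.basis s w α₀ with hP
  have hdeg : P.natDegree < N + 1 := by
    rw [hP, Lagrange.natDegree_basis hinj hα₀]
    have : 1 ≤ s.card := Finset.card_pos.mpr ⟨α₀, hα₀⟩
    omega
  have key : ∑ α ∈ s, c α * P.eval (w α) = 0 := by
    have : ∀ α ∈ s, c α * P.eval (w α)
        = ∑ m ∈ Finset.range (N+1), P.coeff m * (c α * w α ^ m) := by
      intro α hα
      rw [Polynomial.eval_eq_sum_range' hdeg, Finset.mul_sum]
      exact Finset.sum_congr rfl fun m _ => by ring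
    rw [Finset.sum_congr rfl this, Finset.sum_comm]
    refine Finset.sum_eq_zero fun m hm => ?_
    rw [← Finset.mul_sum, hz m hm, mul_zero]
  rw [← key, Finset.sum_eq_single α₀]
  · rw [hP, Lagrange.eval_basis_self hinj hα₀, mul_one]
  · intro β hβ hne
    rw [hP, Lagrange.eval_basis_of_ne (Ne.symm hne) hβ, mul_zero]
  · intro hcon; exact absurd hα₀ hcon

lemma sdft_eq {k : ℕ} (a : Fin k → ℂ) (ω : Fin k → ℤ) (p : ℕ) (hp : 0 < p) (h : ℕ) (t : ℝ) :
    sdft a ω p t h = (p : ℂ) * ∑ j ∈ aliasIdx ω p h,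
      a j * Complex.exp (2 * (Real.pi : ℂ) * Complex.I * (ω j : ℂ) * (t : ℂ)) := by
  have hpc : (p : ℂ) ≠ 0 := Nat.cast_ne_zero.mpr hp.ne'
  unfold sdft signal
  simp_rw [Finset.sum_mul]
  rw [Finset.sum_comm]
  have key : ∀ j : Fin k, ∑ n ∈ Finset.range p,
      a j * Complex.exp (2 * (Real.pi : ℂ) * Complex.I * (ω j : ℂ) * (((n : ℝ) / (p : ℝ) + t : ℝ) : ℂ)) *
        Complex.exp (-(2 * (Real.pi : ℂ) * Complex.I) * (n : ℂ) * (h : ℂ) / (p : ℂ))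
      = (a j * Complex.exp (2 * (Real.pi : ℂ) * Complex.I * (ω j : ℂ) * (t : ℂ))) *
        (if j ∈ aliasIdx ω p h then (p : ℂ) else 0) := by
    intro j
    set z : ℂ := Complex.exp (2 * (Real.pi : ℂ) * Complex.I * ((ω j - (h : ℤ) : ℤ) : ℂ) / (p : ℂ)) with hz
    have hterm : ∀ n ∈ Finset.range p,
        a j * Complex.exp (2 * (Real.pi : ℂ) * Complex.I * (ω j : ℂ) * (((n : ℝ) / (p : ℝ) + t : ℝ) : ℂ)) *
          Complex.exp (-(2 * (Real.pi : ℂ) * Complex.I) * (n : ℂ) * (h : ℂ) / (p : ℂ))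
        = (a j * Complex.exp (2 * (Real.pi : ℂ) * Complex.I * (ω j : ℂ) * (t : ℂ))) * z ^ n := by
      intro n _
      rw [hz, ← Complex.exp_nat_mul]
      simp only [mul_assoc, ← Complex.exp_add]
      congr 2
      push_cast
      field_simp
      ring
    rw [Finset.sum_congr rfl hterm, ← Finset.mul_sum]
    congr 1
    by_cases hj : j ∈ aliasIdx ω p h
    · rw [if_pos hj]
      have hdvd : (p : ℤ) ∣ (ω j - (h : ℤ)) := by
        have := (Finset.mem_filter.mp hj).2
        exact Int.ModEq.dvd this.symm
      obtain ⟨d, hd⟩ := hdvd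
      have hz1 : z = 1 := by
        rw [hz, hd]
        have : 2 * (Real.pi : ℂ) * Complex.I * (((p : ℤ) * d : ℤ) : ℂ) / (p : ℂ)
            = (d : ℂ) * (2 * (Real.pi : ℂ) * Complex.I) := by
          push_cast; field_simp
        rw [this, Complex.exp_int_mul_two_pi_mul_I]
      simp [hz1]
    · rw [if_neg hj]
      have h2pi : (2 * (Real.pi : ℂ) * Complex.I) ≠ 0 :=
        mul_ne_zero (mul_ne_zero two_ne_zero (Complex.ofReal_ne_zero.mpr Real.pi_ne_zero))
          Complex.I_ne_zero
      have hz1 : z ≠ 1 := by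
        intro hcontra
        rw [hz, Complex.exp_eq_one_iff] at hcontra
        obtain ⟨n, hn⟩ := hcontra
        have hcast : ((ω j - (h : ℤ) : ℤ) : ℂ) = ((n * (p : ℤ) : ℤ) : ℂ) := by
          have h1 : 2 * (Real.pi : ℂ) * Complex.I * ((ω j - (h : ℤ) : ℤ) : ℂ) / (p : ℂ)
              = (2 * (Real.pi : ℂ) * Complex.I) * (((ω j - (h : ℤ) : ℤ) : ℂ) / (p : ℂ)) := by ring
          have h2 : (n : ℂ) * (2 * (Real.pi : ℂ) * Complex.I)
              = (2 * (Real.pi : ℂ) * Complex.I) * (n : ℂ) := by ring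
          rw [h1, h2] at hn
          have := mul_left_cancel₀ h2pi hn
          push_cast
          field_simp at this ⊢
          push_cast at this; linear_combination this
        have hint : ω j - (h : ℤ) = n * (p : ℤ) := by exact_mod_cast hcast
        apply hj
        simp only [aliasIdx, Finset.mem_filter, Finset.mem_univ, true_and]
        exact Int.ModEq.symm (Int.modEq_iff_dvd.mpr ⟨n, by linarith⟩)
      rw [geom_sum_eq hz1]
      have hzp : z ^ p = 1 := by
        rw [hz, ← Complex.exp_nat_mul]
        have : (p : ℂ) * (2 * (Real.pi : ℂ) * Complex.I * ((ω j - (h : ℤ) : ℤ) : ℂ) / (p : ℂ))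
            = ((ω j - (h : ℤ) : ℤ) : ℂ) * (2 * (Real.pi : ℂ) * Complex.I) := by
          field_simp
        rw [this, Complex.exp_int_mul_two_pi_mul_I]
      rw [hzp]
      simp
  rw [Finset.sum_congr rfl (fun j _ => key j)]
  simp_rw [mul_ite, mul_zero]
  rw [Finset.sum_ite_mem, Finset.univ_inter, Finset.mul_sum]
  exact Finset.sum_congr rfl fun j _ => by ring

theorem stmt4 {k : ℕ} (a : Fin k → ℂ) (ω : Fin k → ℤ) (hω : Function.Injective ω)
    (ha : ∀ j, a j ≠ 0) (p : ℕ) (hp : 1 < p) (h : ℕ) (hh : h < p)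
    (hq : 1 < (aliasIdx ω p h).card) (ε : ℝ) (hε : 0 < ε)
    (hdistinct : ∀ α ∈ ((aliasIdx ω p h) ×ˢ (aliasIdx ω p h)).image
        (fun jl : Fin k × Fin k => ω jl.1 - ω jl.2),
      ∀ β ∈ ((aliasIdx ω p h) ×ˢ (aliasIdx ω p h)).image
        (fun jl : Fin k × Fin k => ω jl.1 - ω jl.2),
      α ≠ β → ¬ ∃ n : ℤ, ε * ((α : ℝ) - (β : ℝ)) = (n : ℝ)) :
    ∃ m : ℕ, 1 ≤ m ∧ m ≤ (aliasIdx ω p h).card ^ 2 - (aliasIdx ω p h).card ∧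
      ‖sdft a ω p ((m : ℝ) * ε) h‖ ≠ ‖sdft a ω p 0 h‖ := by
  classical
  set I := aliasIdx ω p h with hI
  set q := I.card with hqdef
  by_contra hcon
  push_neg at hcon
  have hp0 : 0 < p := lt_trans one_pos hp
  set F : ℝ → ℂ := fun t => ∑ j ∈ I,
    a j * Complex.exp (2 * (Real.pi : ℂ) * Complex.I * (ω j : ℂ) * (t : ℂ)) with hF
  have hsd : ∀ t : ℝ, sdft a ω p t h = (p : ℂ) * F t := fun t => sdft_eq a ω p hp0 h t
  set r : ℕ → ℝ := fun m => ‖F ((m : ℝ) * ε)‖ with hr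
  set N := q ^ 2 - q with hN
  have hq2 : 2 ≤ q := hq
  have hqq : q ^ 2 = q * q := sq q
  have h2q : 2 * q ≤ q * q := Nat.mul_le_mul_right q hq2
  have habs : ∀ m : ℕ, m ≤ N → r m = r 0 := by
    intro m hm
    rcases Nat.eq_zero_or_pos m with h0 | h1
    · rw [h0]
    · have hc1 := hcon m h1 hm
      rw [hsd, hsd] at hc1
      simp only [norm_mul, Complex.norm_natCast] at hc1
      have hppos : (0 : ℝ) < (p : ℝ) := by exact_mod_cast hp0
      have hc2 := mul_left_cancel₀ (ne_of_gt hppos) hc1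
      simpa [hr] using hc2
  set E := ((I ×ˢ I).image fun jl : Fin k × Fin k => ω jl.1 - ω jl.2) with hE
  set w : ℤ → ℂ := fun α =>
    Complex.exp (2 * (Real.pi : ℂ) * Complex.I * (α : ℂ) * (ε : ℂ)) with hw
  set c : ℤ → ℂ := fun α =>
    ∑ jl ∈ (I ×ˢ I).filter (fun jl : Fin k × Fin k => ω jl.1 - ω jl.2 = α),
      a jl.1 * (starRingEnd ℂ) (a jl.2) with hc
  have h2pi : (2 * (Real.pi : ℂ) * Complex.I) ≠ 0 :=
    mul_ne_zero (mul_ne_zero two_ne_zero (Complex.ofReal_ne_zero.mpr Real.pi_ne_zero))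
      Complex.I_ne_zero
  have hFsq : ∀ m : ℕ, ∑ α ∈ E, c α * w α ^ m = (((r m) ^ 2 : ℝ) : ℂ) := by
    intro m
    have hsum1 : ∑ α ∈ E, c α * w α ^ m
        = ∑ jl ∈ I ×ˢ I, (a jl.1 * (starRingEnd ℂ) (a jl.2)) * w (ω jl.1 - ω jl.2) ^ m := by
      rw [← Finset.sum_fiberwise_of_maps_to
        (fun jl hjl => Finset.mem_image_of_mem (fun jl : Fin k × Fin k => ω jl.1 - ω jl.2) hjl)
        (fun jl : Fin k × Fin k => (a jl.1 * (starRingEnd ℂ) (a jl.2)) * w (ω jl.1 - ω jl.2) ^ m)]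
      refine Finset.sum_congr rfl fun α hα => ?_
      rw [hc, Finset.sum_mul]
      refine Finset.sum_congr rfl fun jl hjl => ?_
      have hd : ω jl.1 - ω jl.2 = α := by simpa using (Finset.mem_filter.mp hjl).2
      rw [hd]
    have hsum2 : F ((m : ℝ) * ε) * (starRingEnd ℂ) (F ((m : ℝ) * ε))
        = ∑ jl ∈ I ×ˢ I, (a jl.1 * (starRingEnd ℂ) (a jl.2)) * w (ω jl.1 - ω jl.2) ^ m := by
      simp only [hF, map_sum]
      rw [Finset.sum_mul_sum, Finset.sum_product]
      refine Finset.sum_congr rfl fun j hj => Finset.sum_congr rfl fun l hl => ?_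
      rw [hw, ← Complex.exp_nat_mul, map_mul, ← Complex.exp_conj, mul_mul_mul_comm,
        ← Complex.exp_add]
      congr 1
      simp only [map_mul, map_ofNat, Complex.conj_ofReal, Complex.conj_I, map_intCast]
      push_cast
      ring
    rw [hsum1, ← hsum2, Complex.mul_conj, Complex.normSq_eq_norm_sq]
  have h0E : (0 : ℤ) ∈ E := by
    have hIne : I.Nonempty := Finset.card_pos.mp (by omega)
    obtain ⟨j, hj⟩ := hIne
    exact Finset.mem_image.mpr ⟨(j, j), Finset.mem_product.mpr ⟨hj, hj⟩, sub_self _⟩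
  have hw0 : w 0 = 1 := by simp [hw]
  have hcard : E.card ≤ N + 1 := by
    have h1 : (E.erase 0).card + 1 = E.card := Finset.card_erase_add_one h0E
    have h2 : E.erase 0 ⊆ I.offDiag.image (fun jl : Fin k × Fin k => ω jl.1 - ω jl.2) := by
      intro α hα
      obtain ⟨hα0, hαE⟩ := Finset.mem_erase.mp hα
      obtain ⟨jl, hjl, heq⟩ := Finset.mem_image.mp hαE
      obtain ⟨hj1, hj2⟩ := Finset.mem_product.mp hjl
      refine Finset.mem_image.mpr ⟨jl, Finset.mem_offDiag.mpr ⟨hj1, hj2, ?_⟩, heq⟩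
      intro he
      exact hα0 (by rw [← heq, he, sub_self])
    have h3 : (E.erase 0).card ≤ I.offDiag.card :=
      le_trans (Finset.card_le_card h2) Finset.card_image_le
    rw [Finset.offDiag_card, ← hqdef] at h3
    omega
  have hwinj : Set.InjOn w E := by
    intro α hα β hβ hwe
    by_contra hne
    apply hdistinct α hα β hβ hne
    simp only [hw] at hwe
    have h1 : Complex.exp (2 * (Real.pi : ℂ) * Complex.I * (α : ℂ) * (ε : ℂ)
        - 2 * (Real.pi : ℂ) * Complex.I * (β : ℂ) * (ε : ℂ)) = 1 := by
      rw [Complex.exp_sub, hwe, div_self (Complex.exp_ne_zero _)]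
    rw [Complex.exp_eq_one_iff] at h1
    obtain ⟨n, hn⟩ := h1
    refine ⟨n, ?_⟩
    have h2 : ((ε * ((α : ℝ) - (β : ℝ)) : ℝ) : ℂ) = ((n : ℝ) : ℂ) := by
      have h3 : (2 * (Real.pi : ℂ) * Complex.I) * ((ε : ℂ) * ((α : ℂ) - (β : ℂ)))
          = (2 * (Real.pi : ℂ) * Complex.I) * (n : ℂ) := by linear_combination hn
      have h4 := mul_left_cancel₀ h2pi h3
      push_cast
      linear_combination h4
    exact_mod_cast h2
  set G0 : ℝ := (r 0) ^ 2 with hG0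
  set c' : ℤ → ℂ := fun α => if α = 0 then c 0 - (G0 : ℂ) else c α with hc'
  have hzero : ∀ m ∈ Finset.range (N + 1), ∑ α ∈ E, c' α * w α ^ m = 0 := by
    intro m hm
    have hm' : m ≤ N := Nat.lt_succ_iff.mp (Finset.mem_range.mp hm)
    have hsplit : ∀ α ∈ E, c' α * w α ^ m
        = c α * w α ^ m - (if α = 0 then (G0 : ℂ) * w α ^ m else 0) := by
      intro α _
      by_cases h0 : α = 0
      · simp only [hc', h0, if_pos]
        ring
      · simp only [hc', h0, if_neg, ite_false]
        ring
    rw [Finset.sum_congr rfl hsplit, Finset.sum_sub_distrib,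
      Finset.sum_ite_eq' E 0 (fun α => (G0 : ℂ) * w α ^ m), if_pos h0E, hw0, one_pow,
      hFsq m, habs m hm', mul_one, hG0]
    exact sub_self _
  have hvanish := vanish_of_sum_pow E w hwinj c' N hcard hzero
  have hIne : I.Nonempty := Finset.card_pos.mp (by omega)
  set M := I.image ω with hM
  have hMne : M.Nonempty := hIne.image ω
  have hMcard : 1 < M.card := by
    rw [hM, Finset.card_image_of_injective _ hω]
    exact hq
  obtain ⟨j₁, hj₁I, hj₁⟩ := Finset.mem_image.mp (M.max'_mem hMne)
  obtain ⟨j₂, hj₂I, hj₂⟩ := Finset.mem_image.mp (M.min'_mem hMne)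
  set αs : ℤ := M.max' hMne - M.min' hMne with hαs
  have hαE : αs ∈ E :=
    Finset.mem_image.mpr ⟨(j₁, j₂), Finset.mem_product.mpr ⟨hj₁I, hj₂I⟩, by rw [hj₁, hj₂]⟩
  have hαne : αs ≠ 0 := by
    have := Finset.min'_lt_max'_of_card M hMcard
    omega
  have hfilter : (I ×ˢ I).filter (fun jl : Fin k × Fin k => ω jl.1 - ω jl.2 = αs)
      = {(j₁, j₂)} := by
    apply Finset.eq_singleton_iff_unique_mem.mpr
    constructor
    · exact Finset.mem_filter.mpr
        ⟨Finset.mem_product.mpr ⟨hj₁I, hj₂I⟩, by rw [hj₁, hj₂]⟩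
    · rintro ⟨j, l⟩ hjl
      obtain ⟨hmem, hdiff⟩ := Finset.mem_filter.mp hjl
      obtain ⟨hjmem, hlmem⟩ := Finset.mem_product.mp hmem
      have h1 : ω j ≤ M.max' hMne := Finset.le_max' M _ (Finset.mem_image_of_mem ω hjmem)
      have h2 : M.min' hMne ≤ ω l := Finset.min'_le M _ (Finset.mem_image_of_mem ω hlmem)
      simp only at hdiff
      have hωj : ω j = M.max' hMne := by omega
      have hωl : ω l = M.min' hMne := by omega
      have e1 : j = j₁ := hω (hωj.trans hj₁.symm)
      have e2 : l = j₂ := hω (hωl.trans hj₂.symm)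
      rw [e1, e2]
  have hcα : c αs = a j₁ * (starRingEnd ℂ) (a j₂) := by
    rw [hc]
    simp only
    rw [hfilter, Finset.sum_singleton]
  have hzero2 := hvanish αs hαE
  simp only [hc', if_neg hαne] at hzero2
  rw [hcα] at hzero2
  have hconj : (starRingEnd ℂ) (a j₂) ≠ 0 := by
    simpa using ha j₂
  exact mul_ne_zero (ha j₁) hconj hzero2
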